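/- Let α, δ ∈ ℝ, β > 0, and let λ ≥ 0 satisfy λ = 0 if α² + 3βδ > 0 and λ > 2√(−(α² + 3βδ))/(3β) if α² + 3βδ ≤ 0. Set c₋ := (α − √(3β²λ² + α² + 3βδ))/(3β) and s(m) := √(3(m − α/(3β))² − (α² + 3βδ)/(3β²)) for m ≤ c₋. Then there exists a constant C > 0, depending only on α, β, δ, λ, such that for every measurable f : (0, ∞) → ℂ with ∫₀^∞ |f(x′)|² dx′ < ∞, one has ∫₀^∞ (∫_{−∞}^{c₋} e^{−x·s(m)} (∫₀^∞ e^{−x′·s(m)} |f(x′)| dx′) dm)² dx ≤ C ∫₀^∞ |f(x′)|² dx′. -/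

import Mathlib

open MeasureTheory

/-- `c₋ = (α − √(3β²λ² + α² + 3βδ))/(3β)`. -/
noncomputable def cMinus (α β δ lam : ℝ) : ℝ :=
  (α - Real.sqrt (3 * β ^ 2 * lam ^ 2 + α ^ 2 + 3 * β * δ)) / (3 * β)

/-- `s(m) = √(3(m − α/(3β))² − (α² + 3βδ)/(3β²))`. -/
noncomputable def sHNLS (α β δ : ℝ) (m : ℝ) : ℝ :=
  Real.sqrt (3 * (m - α / (3 * β)) ^ 2 - (α ^ 2 + 3 * β * δ) / (3 * β ^ 2))

section Aux

open Set Real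
open scoped ENNReal

noncomputable def hilbertJ : ℝ := ∫ u in Ioi (0:ℝ), u ^ (-2⁻¹ : ℝ) * (1 + u)⁻¹

/-- helper: `ofReal` of an integral of a nonneg function is at most the lintegral. -/
lemma ofReal_int_le {μ : Measure ℝ} (f : ℝ → ℝ) (hf : 0 ≤ᵐ[μ] f) :
    ENNReal.ofReal (∫ x, f x ∂μ) ≤ ∫⁻ x, ENNReal.ofReal (f x) ∂μ := by
  by_cases hfi : Integrable f μ
  · exact le_of_eq (ofReal_integral_eq_lintegral_ofReal hfi hf)
  · rw [integral_undef hfi]; simp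

/-- lintegral of a decaying exponential over `Iio a`. -/
lemma lint_exp_Iio (a : ℝ) {c : ℝ} (hc : 0 < c) :
    ∫⁻ m in Iio a, ENNReal.ofReal (Real.exp (-(c * (a - m)))) = ENNReal.ofReal c⁻¹ := by
  have hmp : MeasurePreserving (fun m : ℝ => a - m) volume volume :=
    Measure.measurePreserving_sub_left volume a
  have hpre : (fun m : ℝ => a - m) ⁻¹' (Ioi 0) = Iio a := by
    ext x; simp [sub_pos]
  have hmeas : Measurable fun v : ℝ => ENNReal.ofReal (Real.exp (-(c * v))) :=
    ENNReal.measurable_ofReal.comp (Real.measurable_exp.comp (measurable_const.mul measurable_id).neg)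
  calc ∫⁻ m in Iio a, ENNReal.ofReal (Real.exp (-(c * (a - m))))
      = ∫⁻ v in Ioi 0, ENNReal.ofReal (Real.exp (-(c * v))) := by
        rw [← hpre]
        exact hmp.setLIntegral_comp_preimage measurableSet_Ioi hmeas
    _ = ENNReal.ofReal c⁻¹ := by
        have hint : IntegrableOn (fun v : ℝ => Real.exp (-(c * v))) (Ioi 0) := by
          simpa [neg_mul] using exp_neg_integrableOn_Ioi 0 hc
        rw [← ofReal_integral_eq_lintegral_ofReal hint
          (ae_of_all _ fun v => (Real.exp_pos _).le)]
        congr 1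
        have := integral_comp_mul_left_Ioi (fun y : ℝ => Real.exp (-y)) 0 hc
        simp only [mul_zero, smul_eq_mul] at this
        rw [this, integral_exp_neg_Ioi_zero, mul_one]

lemma rad_nonneg (α β δ : ℝ) (hβ : 0 < β) (lam : ℝ) (hlam0 : 0 ≤ lam)
    (hlam2 : α ^ 2 + 3 * β * δ ≤ 0 →
      2 * Real.sqrt (-(α ^ 2 + 3 * β * δ)) / (3 * β) < lam) :
    0 ≤ 3 * β ^ 2 * lam ^ 2 + α ^ 2 + 3 * β * δ := by
  by_cases hP : 0 < α ^ 2 + 3 * β * δ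
  · nlinarith [sq_nonneg (β * lam)]
  · push_neg at hP
    have h := hlam2 hP
    have hs : Real.sqrt (-(α ^ 2 + 3 * β * δ)) ^ 2 = -(α ^ 2 + 3 * β * δ) :=
      Real.sq_sqrt (by linarith)
    have hs0 : 0 ≤ Real.sqrt (-(α ^ 2 + 3 * β * δ)) := Real.sqrt_nonneg _
    have h3β : (0:ℝ) < 3 * β := by linarith
    rw [div_lt_iff₀ h3β] at h
    nlinarith [sq_nonneg (β * lam)]

lemma sqrt3_le_s (α β δ : ℝ) (hβ : 0 < β) (lam : ℝ) (hlam0 : 0 ≤ lam)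
    (hlam2 : α ^ 2 + 3 * β * δ ≤ 0 →
      2 * Real.sqrt (-(α ^ 2 + 3 * β * δ)) / (3 * β) < lam)
    {m : ℝ} (hm : m ≤ cMinus α β δ lam) :
    Real.sqrt 3 * (cMinus α β δ lam - m) ≤ sHNLS α β δ m := by
  have hβ' : β ≠ 0 := ne_of_gt hβ
  have hD : 0 ≤ 3 * β ^ 2 * lam ^ 2 + α ^ 2 + 3 * β * δ :=
    rad_nonneg α β δ hβ lam hlam0 hlam2
  set S := Real.sqrt (3 * β ^ 2 * lam ^ 2 + α ^ 2 + 3 * β * δ) with hS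
  have hS2 : S ^ 2 = 3 * β ^ 2 * lam ^ 2 + α ^ 2 + 3 * β * δ := Real.sq_sqrt hD
  have hS0 : 0 ≤ S := Real.sqrt_nonneg _
  have h3β : (0:ℝ) < 3 * β := by linarith
  have hm' : 3 * β * m ≤ α - S := by
    rw [cMinus, le_div_iff₀ h3β] at hm; linarith
  have poly : 3 * (α - S - 3 * β * m) ^ 2 ≤
      3 * (3 * β * m - α) ^ 2 - 3 * (α ^ 2 + 3 * β * δ) := by
    nlinarith [mul_nonneg hS0 (sub_nonneg.mpr hm'), sq_nonneg (β * lam)]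
  have key : 3 * (cMinus α β δ lam - m) ^ 2 ≤
      3 * (m - α / (3 * β)) ^ 2 - (α ^ 2 + 3 * β * δ) / (3 * β ^ 2) := by
    have e1 : cMinus α β δ lam - m = (α - S - 3 * β * m) / (3 * β) := by
      rw [cMinus, ← hS]; field_simp
    calc 3 * (cMinus α β δ lam - m) ^ 2
        = 3 * (α - S - 3 * β * m) ^ 2 / (3 * β) ^ 2 := by rw [e1, div_pow]; ring
      _ ≤ (3 * (3 * β * m - α) ^ 2 - 3 * (α ^ 2 + 3 * β * δ)) / (3 * β) ^ 2 := by
          gcongr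
      _ = 3 * (m - α / (3 * β)) ^ 2 - (α ^ 2 + 3 * β * δ) / (3 * β ^ 2) := by
          field_simp
  have hL0 : 0 ≤ Real.sqrt 3 * (cMinus α β δ lam - m) :=
    mul_nonneg (Real.sqrt_nonneg _) (by linarith)
  rw [sHNLS, show (3:ℝ) * (m - α / (3 * β)) ^ 2 - (α ^ 2 + 3 * β * δ) / (3 * β ^ 2) =
    3 * (m - α / (3 * β)) ^ 2 - (α ^ 2 + 3 * β * δ) / (3 * β ^ 2) from rfl]
  rw [show Real.sqrt 3 * (cMinus α β δ lam - m) =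
    Real.sqrt (3 * (cMinus α β δ lam - m) ^ 2) by
      rw [Real.sqrt_mul (by norm_num), Real.sqrt_sq (by linarith)]]
  exact Real.sqrt_le_sqrt key

lemma s_nonneg (α β δ m : ℝ) : 0 ≤ sHNLS α β δ m := Real.sqrt_nonneg _

lemma kernel_bound (α β δ : ℝ) (hβ : 0 < β) (lam : ℝ) (hlam0 : 0 ≤ lam)
    (hlam2 : α ^ 2 + 3 * β * δ ≤ 0 →
      2 * Real.sqrt (-(α ^ 2 + 3 * β * δ)) / (3 * β) < lam)
    {t : ℝ} (ht : 0 < t) :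
    ∫⁻ m in Iio (cMinus α β δ lam), ENNReal.ofReal (Real.exp (-(t * sHNLS α β δ m))) ≤
      ENNReal.ofReal ((Real.sqrt 3 * t)⁻¹) := by
  have hc : 0 < Real.sqrt 3 * t := by positivity
  calc ∫⁻ m in Iio (cMinus α β δ lam), ENNReal.ofReal (Real.exp (-(t * sHNLS α β δ m)))
      ≤ ∫⁻ m in Iio (cMinus α β δ lam),
          ENNReal.ofReal (Real.exp (-(Real.sqrt 3 * t * (cMinus α β δ lam - m)))) := by
        refine setLIntegral_mono ?_ fun m hm => ?_
        · exact ENNReal.measurable_ofReal.comp (Real.measurable_exp.comp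
            ((measurable_const.sub measurable_id).const_mul _).neg)
        · refine ENNReal.ofReal_le_ofReal (Real.exp_le_exp.2 (neg_le_neg ?_))
          have h1 := sqrt3_le_s α β δ hβ lam hlam0 hlam2 (le_of_lt hm)
          calc Real.sqrt 3 * t * (cMinus α β δ lam - m)
              = t * (Real.sqrt 3 * (cMinus α β δ lam - m)) := by ring
            _ ≤ t * sHNLS α β δ m := by
                exact mul_le_mul_of_nonneg_left h1 ht.le
    _ = ENNReal.ofReal ((Real.sqrt 3 * t)⁻¹) := lint_exp_Iio _ hc

/-- The weight function is integrable on `(0,∞)`. -/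
lemma integrableOn_weight {x : ℝ} (hx : 0 < x) :
    IntegrableOn (fun u : ℝ => u ^ (-2⁻¹ : ℝ) * (x + u)⁻¹) (Ioi 0) := by
  have hmeas : Measurable fun u : ℝ => u ^ (-2⁻¹ : ℝ) * (x + u)⁻¹ :=
    (measurable_id.pow_const _).mul (measurable_const.add measurable_id).inv
  rw [← Ioc_union_Ioi_eq_Ioi (zero_le_one (α := ℝ))]
  refine IntegrableOn.union ?_ ?_
  · -- on (0,1]: dominated by x⁻¹ * u^(-1/2)
    have hbase : IntegrableOn (fun u : ℝ => x⁻¹ * u ^ (-2⁻¹ : ℝ)) (Ioc 0 1) := by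
      refine Integrable.const_mul ?_ _
      exact (intervalIntegral.intervalIntegrable_rpow' (by norm_num)).1
    refine Integrable.mono' hbase hmeas.aestronglyMeasurable ?_
    filter_upwards [ae_restrict_mem measurableSet_Ioc] with u hu
    have hu0 : 0 < u := hu.1
    have h1 : 0 < x + u := by linarith
    rw [Real.norm_eq_abs, abs_of_nonneg (by positivity)]
    have : (x + u)⁻¹ ≤ x⁻¹ := by
      apply inv_anti₀ hx; linarith
    calc u ^ (-2⁻¹ : ℝ) * (x + u)⁻¹ ≤ u ^ (-2⁻¹ : ℝ) * x⁻¹ := by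
          apply mul_le_mul_of_nonneg_left this (by positivity)
      _ = x⁻¹ * u ^ (-2⁻¹ : ℝ) := by ring
  · -- on (1,∞): dominated by u^(-3/2)
    have hbase : IntegrableOn (fun u : ℝ => u ^ (-(3/2) : ℝ)) (Ioi 1) :=
      integrableOn_Ioi_rpow_of_lt (by norm_num) one_pos
    refine Integrable.mono' hbase hmeas.aestronglyMeasurable ?_
    filter_upwards [ae_restrict_mem measurableSet_Ioi] with u hu
    have hu1 : (1:ℝ) < u := hu
    have hu0 : 0 < u := by linarith
    have h1 : 0 < x + u := by linarith
    rw [Real.norm_eq_abs, abs_of_nonneg (by positivity)]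
    have h2 : (x + u)⁻¹ ≤ u⁻¹ := by
      apply inv_anti₀ hu0; linarith
    calc u ^ (-2⁻¹ : ℝ) * (x + u)⁻¹ ≤ u ^ (-2⁻¹ : ℝ) * u⁻¹ := by
          apply mul_le_mul_of_nonneg_left h2 (by positivity)
      _ = u ^ (-(3/2) : ℝ) := by
          rw [← Real.rpow_neg_one u, ← Real.rpow_add hu0]; norm_num

/-- Schur test weight identity. -/
lemma weight_integral {x : ℝ} (hx : 0 < x) :
    ∫ u in Ioi (0:ℝ), u ^ (-2⁻¹ : ℝ) * (x + u)⁻¹ = x ^ (-2⁻¹ : ℝ) * hilbertJ := by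
  have h := integral_comp_mul_left_Ioi (fun u : ℝ => u ^ (-2⁻¹ : ℝ) * (x + u)⁻¹) 0 hx
  simp only [mul_zero, smul_eq_mul] at h
  have h2 : ∫ u in Ioi (0:ℝ), (x * u) ^ (-2⁻¹ : ℝ) * (x + x * u)⁻¹
      = x ^ (-2⁻¹ : ℝ) * x⁻¹ * hilbertJ := by
    rw [hilbertJ, ← integral_const_mul]
    refine setIntegral_congr_fun measurableSet_Ioi fun u hu => ?_
    have hu0 : (0:ℝ) < u := hu
    rw [Real.mul_rpow hx.le hu0.le, show x + x * u = x * (1 + u) by ring, mul_inv]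
    ring
  rw [h2] at h
  have hx' : x⁻¹ ≠ 0 := inv_ne_zero hx.ne'
  have h3 : x⁻¹ * (x ^ (-2⁻¹ : ℝ) * hilbertJ) = x⁻¹ * ∫ u in Ioi (0:ℝ), u ^ (-2⁻¹ : ℝ) * (x + u)⁻¹ := by
    rw [← h]; ring
  exact (mul_left_cancel₀ hx' h3).symm

lemma weight_lintegral {x : ℝ} (hx : 0 < x) :
    ∫⁻ u in Ioi (0:ℝ), ENNReal.ofReal (u ^ (-2⁻¹ : ℝ)) * ENNReal.ofReal ((x + u)⁻¹)
      = ENNReal.ofReal (x ^ (-2⁻¹ : ℝ)) * ENNReal.ofReal hilbertJ := by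
  calc ∫⁻ u in Ioi (0:ℝ), ENNReal.ofReal (u ^ (-2⁻¹ : ℝ)) * ENNReal.ofReal ((x + u)⁻¹)
      = ∫⁻ u in Ioi (0:ℝ), ENNReal.ofReal (u ^ (-2⁻¹ : ℝ) * (x + u)⁻¹) := by
        refine setLIntegral_congr_fun measurableSet_Ioi (fun u hu => ?_)
        have hu0 : (0:ℝ) < u := hu
        rw [ENNReal.ofReal_mul (by positivity)]
    _ = ENNReal.ofReal (∫ u in Ioi (0:ℝ), u ^ (-2⁻¹ : ℝ) * (x + u)⁻¹) := by
        rw [ofReal_integral_eq_lintegral_ofReal (integrableOn_weight hx)]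
        refine (ae_restrict_iff' measurableSet_Ioi).2 (ae_of_all _ fun u hu => ?_)
        have hu0 : (0:ℝ) < u := hu
        have : (0:ℝ) < x + u := by linarith
        positivity
    _ = ENNReal.ofReal (x ^ (-2⁻¹ : ℝ)) * ENNReal.ofReal hilbertJ := by
        rw [weight_integral hx, ENNReal.ofReal_mul (by positivity)]

lemma hilbert_ineq (g : ℝ → ℝ≥0∞) (hg : Measurable g) :
    ∫⁻ x in Ioi (0:ℝ), (∫⁻ y in Ioi (0:ℝ), g y * ENNReal.ofReal ((x + y)⁻¹)) ^ 2
      ≤ ENNReal.ofReal hilbertJ ^ 2 * ∫⁻ y in Ioi (0:ℝ), g y ^ 2 := by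
  set J := ENNReal.ofReal hilbertJ with hJ
  -- weights
  set w : ℝ → ℝ≥0∞ := fun y => ENNReal.ofReal (y ^ (-2⁻¹ : ℝ)) with hw
  set v : ℝ → ℝ≥0∞ := fun y => ENNReal.ofReal (y ^ (2⁻¹ : ℝ)) with hv
  have hwm : Measurable w := (measurable_id.pow_const _).ennreal_ofReal
  have hvm : Measurable v := (measurable_id.pow_const _).ennreal_ofReal
  have hkm : ∀ x : ℝ, Measurable fun y => ENNReal.ofReal ((x + y)⁻¹) := fun x =>
    ((measurable_const.add measurable_id).inv).ennreal_ofReal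
  -- Cauchy-Schwarz step
  have CS : ∀ x : ℝ, x ∈ Ioi (0:ℝ) →
      (∫⁻ y in Ioi (0:ℝ), g y * ENNReal.ofReal ((x + y)⁻¹)) ^ 2 ≤
        (ENNReal.ofReal (x ^ (-2⁻¹ : ℝ)) * J) *
          ∫⁻ y in Ioi (0:ℝ), g y ^ 2 * v y * ENNReal.ofReal ((x + y)⁻¹) := by
    intro x hx
    have hx0 : (0:ℝ) < x := hx
    set k : ℝ → ℝ≥0∞ := fun y => ENNReal.ofReal ((x + y)⁻¹) with hk
    set F : ℝ → ℝ≥0∞ := fun y => (w y) ^ (2⁻¹ : ℝ) * (k y) ^ (2⁻¹ : ℝ) with hF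
    set G : ℝ → ℝ≥0∞ := fun y => g y * (w y) ^ (-(2⁻¹) : ℝ) * (k y) ^ (2⁻¹ : ℝ) with hG
    have hFm : AEMeasurable F (volume.restrict (Ioi 0)) :=
      ((hwm.pow_const _).mul ((hkm x).pow_const _)).aemeasurable
    have hGm : AEMeasurable G (volume.restrict (Ioi 0)) :=
      ((hg.mul (hwm.pow_const _)).mul ((hkm x).pow_const _)).aemeasurable
    have hconj : (2:ℝ).HolderConjugate 2 := Real.HolderConjugate.two_two
    have holder := ENNReal.lintegral_mul_le_Lp_mul_Lq (volume.restrict (Ioi 0)) hconj hFm hGm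
    have heq : ∫⁻ y in Ioi (0:ℝ), g y * k y = ∫⁻ y in Ioi (0:ℝ), (F * G) y := by
      refine setLIntegral_congr_fun measurableSet_Ioi (fun y hy => ?_)
      have hy0 : (0:ℝ) < y := hy
      have hxy : (0:ℝ) < x + y := by linarith
      have hwne : w y ≠ 0 := by
        simp only [hw, ne_eq, ENNReal.ofReal_eq_zero, not_le]; positivity
      have hwnt : w y ≠ ⊤ := ENNReal.ofReal_ne_top
      have hkne : k y ≠ 0 := by
        simp only [hk, ne_eq, ENNReal.ofReal_eq_zero, not_le]; positivity
      have hknt : k y ≠ ⊤ := ENNReal.ofReal_ne_top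
      have e1 : (w y) ^ (2⁻¹ : ℝ) * (w y) ^ (-(2⁻¹) : ℝ) = 1 := by
        rw [← ENNReal.rpow_add _ _ hwne hwnt]; norm_num
      have e2 : (k y) ^ (2⁻¹ : ℝ) * (k y) ^ (2⁻¹ : ℝ) = k y := by
        rw [← ENNReal.rpow_add _ _ hkne hknt]; norm_num
      simp only [hF, hG, Pi.mul_apply]
      calc g y * k y = (w y ^ (2⁻¹:ℝ) * w y ^ (-(2⁻¹):ℝ)) *
            (k y ^ (2⁻¹:ℝ) * k y ^ (2⁻¹:ℝ)) * g y := by rw [e1, e2]; ring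
        _ = w y ^ (2⁻¹:ℝ) * k y ^ (2⁻¹:ℝ) * (g y * w y ^ (-(2⁻¹):ℝ) * k y ^ (2⁻¹:ℝ)) := by
            ring
    have hF2 : ∫⁻ y in Ioi (0:ℝ), F y ^ (2:ℝ) = ENNReal.ofReal (x ^ (-2⁻¹ : ℝ)) * J := by
      rw [← weight_lintegral hx0]
      refine setLIntegral_congr_fun measurableSet_Ioi (fun y hy => ?_)
      simp only [hF]
      rw [ENNReal.mul_rpow_of_nonneg _ _ (by norm_num : (0:ℝ) ≤ 2),
        ← ENNReal.rpow_mul, ← ENNReal.rpow_mul,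
        show ((2:ℝ)⁻¹ * 2 : ℝ) = 1 by norm_num, ENNReal.rpow_one, ENNReal.rpow_one]
    have hG2 : ∫⁻ y in Ioi (0:ℝ), G y ^ (2:ℝ) =
        ∫⁻ y in Ioi (0:ℝ), g y ^ 2 * v y * k y := by
      refine setLIntegral_congr_fun measurableSet_Ioi (fun y hy => ?_)
      have hy0 : (0:ℝ) < y := hy
      simp only [hG]
      rw [ENNReal.mul_rpow_of_nonneg _ _ (by norm_num : (0:ℝ) ≤ 2),
        ENNReal.mul_rpow_of_nonneg _ _ (by norm_num : (0:ℝ) ≤ 2),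
        ← ENNReal.rpow_mul, ← ENNReal.rpow_mul,
        show (-(2⁻¹) * 2 : ℝ) = -1 by norm_num,
        show ((2:ℝ)⁻¹ * 2 : ℝ) = 1 by norm_num,
        ENNReal.rpow_one, ENNReal.rpow_neg_one,
        show ((2:ℝ) = ((2:ℕ):ℝ)) by norm_num, ENNReal.rpow_natCast]
      congr 2
      rw [hw, hv, ← ENNReal.ofReal_inv_of_pos (by positivity : (0:ℝ) < y ^ (-2⁻¹ : ℝ)),
        Real.rpow_neg hy0.le, inv_inv]
    calc (∫⁻ y in Ioi (0:ℝ), g y * k y) ^ 2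
        ≤ ((∫⁻ y in Ioi (0:ℝ), F y ^ (2:ℝ)) ^ (1/(2:ℝ)) *
            (∫⁻ y in Ioi (0:ℝ), G y ^ (2:ℝ)) ^ (1/(2:ℝ))) ^ 2 := by
          rw [heq]
          exact pow_le_pow_left' holder 2
      _ = (∫⁻ y in Ioi (0:ℝ), F y ^ (2:ℝ)) * (∫⁻ y in Ioi (0:ℝ), G y ^ (2:ℝ)) := by
          rw [mul_pow, ← ENNReal.rpow_natCast (_ ^ (1/(2:ℝ))) 2,
            ← ENNReal.rpow_natCast ((∫⁻ y in Ioi (0:ℝ), G y ^ (2:ℝ)) ^ (1/(2:ℝ))) 2,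
            ← ENNReal.rpow_mul, ← ENNReal.rpow_mul]
          norm_num
      _ = (ENNReal.ofReal (x ^ (-2⁻¹ : ℝ)) * J) *
            ∫⁻ y in Ioi (0:ℝ), g y ^ 2 * v y * k y := by rw [hF2, hG2]
  -- integrate and swap
  have swap : ∫⁻ x in Ioi (0:ℝ), ENNReal.ofReal (x ^ (-2⁻¹ : ℝ)) *
        ∫⁻ y in Ioi (0:ℝ), g y ^ 2 * v y * ENNReal.ofReal ((x + y)⁻¹)
      = J * ∫⁻ y in Ioi (0:ℝ), g y ^ 2 := by
    have hmeas : Measurable (Function.uncurry fun x y : ℝ =>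
        ENNReal.ofReal (x ^ (-2⁻¹ : ℝ)) * (g y ^ 2 * v y * ENNReal.ofReal ((x + y)⁻¹))) := by
      apply Measurable.mul
      · exact (measurable_fst.pow_const _).ennreal_ofReal
      · exact (((hg.comp measurable_snd).pow_const 2).mul (hvm.comp measurable_snd)).mul
          ((measurable_fst.add measurable_snd).inv).ennreal_ofReal
    calc ∫⁻ x in Ioi (0:ℝ), ENNReal.ofReal (x ^ (-2⁻¹ : ℝ)) *
          ∫⁻ y in Ioi (0:ℝ), g y ^ 2 * v y * ENNReal.ofReal ((x + y)⁻¹)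
        = ∫⁻ x in Ioi (0:ℝ), ∫⁻ y in Ioi (0:ℝ), ENNReal.ofReal (x ^ (-2⁻¹ : ℝ)) *
            (g y ^ 2 * v y * ENNReal.ofReal ((x + y)⁻¹)) := by
          refine lintegral_congr fun x => ?_
          rw [lintegral_const_mul' _ _ ENNReal.ofReal_ne_top]
      _ = ∫⁻ y in Ioi (0:ℝ), ∫⁻ x in Ioi (0:ℝ), ENNReal.ofReal (x ^ (-2⁻¹ : ℝ)) *
            (g y ^ 2 * v y * ENNReal.ofReal ((x + y)⁻¹)) := by
          exact lintegral_lintegral_swap hmeas.aemeasurable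
      _ = ∫⁻ y in Ioi (0:ℝ), (g y ^ 2 * v y) *
            ∫⁻ x in Ioi (0:ℝ), ENNReal.ofReal (x ^ (-2⁻¹ : ℝ)) * ENNReal.ofReal ((x + y)⁻¹) := by
          refine setLIntegral_congr_fun measurableSet_Ioi (fun y hy => ?_)
          have hfm : Measurable fun x : ℝ =>
              ENNReal.ofReal (x ^ (-2⁻¹ : ℝ)) * ENNReal.ofReal ((x + y)⁻¹) :=
            ((measurable_id'.pow_const _).ennreal_ofReal).mul
              ((measurable_id'.add_const y).inv.ennreal_ofReal)
          rw [← lintegral_const_mul _ hfm]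
          refine lintegral_congr fun x => ?_
          ring
      _ = ∫⁻ y in Ioi (0:ℝ), (g y ^ 2 * v y) *
            (ENNReal.ofReal (y ^ (-2⁻¹ : ℝ)) * J) := by
          refine setLIntegral_congr_fun measurableSet_Ioi (fun y hy => ?_)
          have hy0 : (0:ℝ) < y := hy
          congr 1
          rw [← weight_lintegral hy0]
          refine setLIntegral_congr_fun measurableSet_Ioi (fun x hx => ?_)
          rw [add_comm]
      _ = ∫⁻ y in Ioi (0:ℝ), J * (g y ^ 2) := by
          refine setLIntegral_congr_fun measurableSet_Ioi (fun y hy => ?_)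
          have hy0 : (0:ℝ) < y := hy
          have : v y * ENNReal.ofReal (y ^ (-2⁻¹ : ℝ)) = 1 := by
            rw [hv, ← ENNReal.ofReal_mul (by positivity), ← Real.rpow_add hy0]
            norm_num
          calc g y ^ 2 * v y * (ENNReal.ofReal (y ^ (-2⁻¹ : ℝ)) * J)
              = (v y * ENNReal.ofReal (y ^ (-2⁻¹ : ℝ))) * (g y ^ 2) * J := by ring
            _ = J * g y ^ 2 := by rw [this]; ring
      _ = J * ∫⁻ y in Ioi (0:ℝ), g y ^ 2 := by
          rw [lintegral_const_mul' _ _ ENNReal.ofReal_ne_top]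
  calc ∫⁻ x in Ioi (0:ℝ), (∫⁻ y in Ioi (0:ℝ), g y * ENNReal.ofReal ((x + y)⁻¹)) ^ 2
      ≤ ∫⁻ x in Ioi (0:ℝ), (ENNReal.ofReal (x ^ (-2⁻¹ : ℝ)) * J) *
          ∫⁻ y in Ioi (0:ℝ), g y ^ 2 * v y * ENNReal.ofReal ((x + y)⁻¹) := by
        refine lintegral_mono_ae ?_
        filter_upwards [ae_restrict_mem measurableSet_Ioi] with x hx
        exact CS x hx
    _ = J * ∫⁻ x in Ioi (0:ℝ), ENNReal.ofReal (x ^ (-2⁻¹ : ℝ)) *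
          ∫⁻ y in Ioi (0:ℝ), g y ^ 2 * v y * ENNReal.ofReal ((x + y)⁻¹) := by
        have hJt : J ≠ ⊤ := ENNReal.ofReal_ne_top
        rw [← lintegral_const_mul' _ _ hJt]
        refine lintegral_congr fun x => ?_
        ring
    _ = J * (J * ∫⁻ y in Ioi (0:ℝ), g y ^ 2) := by rw [swap]
    _ = J ^ 2 * ∫⁻ y in Ioi (0:ℝ), g y ^ 2 := by ring

/-- `L²`-bound for the composed Laplace-type kernel:
`∫₀^∞ (∫_{−∞}^{c₋} e^{−x·s(m)} (∫₀^∞ e^{−x′·s(m)} |f(x′)| dx′) dm)² dx ≤ C ∫₀^∞ |f(x′)|² dx′`. -/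
theorem composed_laplace_L2_bound (α β δ : ℝ) (hβ : 0 < β) (lam : ℝ)
    (hlam0 : 0 ≤ lam)
    (hlam1 : 0 < α ^ 2 + 3 * β * δ → lam = 0)
    (hlam2 : α ^ 2 + 3 * β * δ ≤ 0 →
      2 * Real.sqrt (-(α ^ 2 + 3 * β * δ)) / (3 * β) < lam) :
    ∃ C > 0, ∀ f : ℝ → ℂ, Measurable f →
      (∫⁻ x in Set.Ioi (0 : ℝ), ENNReal.ofReal (‖f x‖ ^ 2) < ⊤) →
      (∫⁻ x in Set.Ioi (0 : ℝ),
          ENNReal.ofReal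
            ((∫ m in Set.Iio (cMinus α β δ lam),
                Real.exp (-(x * sHNLS α β δ m)) *
                  (∫ x' in Set.Ioi (0 : ℝ), Real.exp (-(x' * sHNLS α β δ m)) * ‖f x'‖)) ^ 2)) ≤
        ENNReal.ofReal C *
          ∫⁻ x' in Set.Ioi (0 : ℝ), ENNReal.ofReal (‖f x'‖ ^ 2) := by
  have hJ0 : 0 ≤ hilbertJ := by
    refine setIntegral_nonneg measurableSet_Ioi fun u hu => ?_
    have hu0 : (0:ℝ) < u := hu
    positivity
  have hs3 : (0:ℝ) < Real.sqrt 3 := by positivity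
  refine ⟨((Real.sqrt 3)⁻¹ * hilbertJ) ^ 2 + 1, by positivity, ?_⟩
  intro f hf _hfin
  set g : ℝ → ℝ≥0∞ := fun y => ENNReal.ofReal ‖f y‖ with hgdef
  have hgm : Measurable g := hf.norm.ennreal_ofReal
  have hscont : Continuous (sHNLS α β δ) := by
    unfold sHNLS; fun_prop
  have hsm : Measurable (sHNLS α β δ) := hscont.measurable
  set s : ℝ → ℝ := sHNLS α β δ with hsdef
  set c₀ : ℝ := cMinus α β δ lam with hc₀
  set I : ℝ → ℝ := fun m => ∫ x' in Ioi (0:ℝ), Real.exp (-(x' * s m)) * ‖f x'‖ with hI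
  have hInn : ∀ m, 0 ≤ I m := fun m =>
    integral_nonneg fun y => mul_nonneg (Real.exp_pos _).le (norm_nonneg _)
  set A : ℝ → ℝ := fun x => ∫ m in Iio c₀, Real.exp (-(x * s m)) * I m with hA
  have hAnn : ∀ x, 0 ≤ A x := fun x =>
    integral_nonneg fun m => mul_nonneg (Real.exp_pos _).le (hInn m)
  set T : ℝ → ℝ≥0∞ := fun x => ∫⁻ y in Ioi (0:ℝ), g y * ENNReal.ofReal ((x + y)⁻¹) with hT
  have key : ∀ x ∈ Ioi (0:ℝ), ENNReal.ofReal (A x) ≤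
      ENNReal.ofReal ((Real.sqrt 3)⁻¹) * T x := by
    intro x hx
    have hx0 : (0:ℝ) < x := hx
    calc ENNReal.ofReal (A x)
        ≤ ∫⁻ m in Iio c₀, ENNReal.ofReal (Real.exp (-(x * s m)) * I m) :=
          ofReal_int_le _ (ae_of_all _ fun m =>
            mul_nonneg (Real.exp_pos _).le (hInn m))
      _ ≤ ∫⁻ m in Iio c₀, ENNReal.ofReal (Real.exp (-(x * s m))) *
            ∫⁻ y in Ioi (0:ℝ), ENNReal.ofReal (Real.exp (-(y * s m)) * ‖f y‖) := by
          refine lintegral_mono fun m => ?_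
          rw [ENNReal.ofReal_mul (Real.exp_pos _).le]
          exact mul_le_mul_right (ofReal_int_le _ (ae_of_all _ fun y =>
            mul_nonneg (Real.exp_pos _).le (norm_nonneg _))) _
      _ = ∫⁻ m in Iio c₀, ∫⁻ y in Ioi (0:ℝ),
            ENNReal.ofReal (Real.exp (-((x + y) * s m))) * g y := by
          refine setLIntegral_congr_fun measurableSet_Iio (fun m hm => ?_)
          rw [← lintegral_const_mul' _ _ ENNReal.ofReal_ne_top]
          refine setLIntegral_congr_fun measurableSet_Ioi (fun y hy => ?_)
          rw [← ENNReal.ofReal_mul (Real.exp_pos _).le, ← mul_assoc,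
            ← Real.exp_add, show -(x * s m) + -(y * s m) = -((x + y) * s m) by ring,
            ENNReal.ofReal_mul (Real.exp_pos _).le]
      _ = ∫⁻ y in Ioi (0:ℝ), ∫⁻ m in Iio c₀,
            ENNReal.ofReal (Real.exp (-((x + y) * s m))) * g y := by
          refine lintegral_lintegral_swap ?_
          refine Measurable.aemeasurable ?_
          refine Measurable.mul (f := fun p : ℝ × ℝ => ENNReal.ofReal (Real.exp (-((x + p.2) * s p.1))))
            (g := fun p : ℝ × ℝ => g p.2) ?_ ?_
          · exact (((measurable_const.add measurable_snd).mul
              (hsm.comp measurable_fst)).neg.exp).ennreal_ofReal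
          · exact hgm.comp measurable_snd
      _ ≤ ∫⁻ y in Ioi (0:ℝ), ENNReal.ofReal ((Real.sqrt 3)⁻¹) *
            (g y * ENNReal.ofReal ((x + y)⁻¹)) := by
          refine setLIntegral_mono' measurableSet_Ioi fun y hy => ?_
          have hy0 : (0:ℝ) < y := hy
          have hxy : (0:ℝ) < x + y := by linarith
          calc ∫⁻ m in Iio c₀, ENNReal.ofReal (Real.exp (-((x + y) * s m))) * g y
              = (∫⁻ m in Iio c₀, ENNReal.ofReal (Real.exp (-((x + y) * s m)))) * g y :=
                lintegral_mul_const' _ _ ENNReal.ofReal_ne_top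
            _ ≤ ENNReal.ofReal ((Real.sqrt 3 * (x + y))⁻¹) * g y :=
                mul_le_mul_left (kernel_bound α β δ hβ lam hlam0 hlam2 hxy) _
            _ = ENNReal.ofReal ((Real.sqrt 3)⁻¹) * (g y * ENNReal.ofReal ((x + y)⁻¹)) := by
                rw [mul_inv, ENNReal.ofReal_mul (by positivity)]
                ring
      _ = ENNReal.ofReal ((Real.sqrt 3)⁻¹) * T x := by
          rw [hT, ← lintegral_const_mul' _ _ ENNReal.ofReal_ne_top]
  calc ∫⁻ x in Ioi (0:ℝ), ENNReal.ofReal ((A x) ^ 2)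
      ≤ ∫⁻ x in Ioi (0:ℝ), ENNReal.ofReal ((Real.sqrt 3)⁻¹) ^ 2 * T x ^ 2 := by
        refine lintegral_mono_ae ?_
        filter_upwards [ae_restrict_mem measurableSet_Ioi] with x hx
        rw [ENNReal.ofReal_pow (hAnn x), ← mul_pow]
        exact pow_le_pow_left' (key x hx) 2
    _ = ENNReal.ofReal ((Real.sqrt 3)⁻¹) ^ 2 * ∫⁻ x in Ioi (0:ℝ), T x ^ 2 :=
        lintegral_const_mul' _ _ (ENNReal.pow_ne_top ENNReal.ofReal_ne_top)
    _ ≤ ENNReal.ofReal ((Real.sqrt 3)⁻¹) ^ 2 *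
          (ENNReal.ofReal hilbertJ ^ 2 * ∫⁻ y in Ioi (0:ℝ), g y ^ 2) :=
        mul_le_mul_right (hilbert_ineq g hgm) _
    _ = ENNReal.ofReal (((Real.sqrt 3)⁻¹ * hilbertJ) ^ 2) *
          ∫⁻ y in Ioi (0:ℝ), g y ^ 2 := by
        rw [ENNReal.ofReal_pow (by positivity), ENNReal.ofReal_mul (by positivity),
          mul_pow, mul_assoc]
    _ ≤ ENNReal.ofReal (((Real.sqrt 3)⁻¹ * hilbertJ) ^ 2 + 1) *
          ∫⁻ y in Ioi (0:ℝ), g y ^ 2 := by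
        gcongr
        linarith
    _ = ENNReal.ofReal (((Real.sqrt 3)⁻¹ * hilbertJ) ^ 2 + 1) *
          ∫⁻ x' in Ioi (0:ℝ), ENNReal.ofReal (‖f x'‖ ^ 2) := by
        congr 1
        refine lintegral_congr fun y => ?_
        rw [ENNReal.ofReal_pow (norm_nonneg _)]
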